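/- arXiv:1007.2103 — 3 statements merged into one kernel-verified Lean document; each statement's English description precedes it below -/
import Mathlib

section
/- Let T and T' be two tournaments on the same finite vertex set V. The least m ∈ ℕ such that T' = Inv(T, (X_i)_{i<m}) for some sequence (X_i)_{i<m} of subsets of V (equivalently, the graphic distance d(T,T') in the graph on all tournaments on V whose edges are the pairs (S, Inv(S,X)) with Inv(S,X) ≠ S) equals the Boolean dimension of the Boolean sum T +̇ T'. -/
/-- A tournament on a vertex set `V`: a loopless directed graph such that for all
distinct `x, y` exactly one of `(x,y)`, `(y,x)` is an arc. -/
structure Tournament (V : Type*) where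
  rel : V → V → Prop
  irrefl : ∀ x, ¬ rel x x
  total : ∀ x y, x ≠ y → rel x y ∨ rel y x
  asymm : ∀ x y, rel x y → ¬ rel y x

namespace Tournament

variable {V : Type*} {W : Type*}

/-- The tournament obtained from `T` by reversing all arcs both of whose
endpoints lie in `X`. -/
def inv (T : Tournament V) (X : Set V) : Tournament V where
  rel x y := (x ∈ X ∧ y ∈ X ∧ T.rel y x) ∨ ((x ∉ X ∨ y ∉ X) ∧ T.rel x y)
  irrefl x := by have := T.irrefl x; tauto
  total x y hxy := by
    have := T.total x y hxy
    by_cases hx : x ∈ X <;> by_cases hy : y ∈ X <;> tauto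
  asymm x y := by have h1 := T.asymm x y; have h2 := T.asymm y x; tauto

/-- Successive inversions along a finite sequence of subsets (`X_0` first). -/
def invSeq (T : Tournament V) (Xs : List (Set V)) : Tournament V :=
  Xs.foldl Tournament.inv T

/-- A tournament is acyclic (transitive) when its arc relation is transitive,
i.e. a strict linear order. -/
def IsAcyclic (T : Tournament V) : Prop :=
  ∀ x y z, T.rel x y → T.rel y z → T.rel x z

/-- The inversion index: the least number of subsets to be inverted to reach an
acyclic tournament. -/
noncomputable def index (T : Tournament V) : ℕ :=
  sInf {m | ∃ Xs : List (Set V), Xs.length = m ∧ (T.invSeq Xs).IsAcyclic}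

/-- Induced subtournament on a set of vertices. -/
def restrict (T : Tournament V) (A : Set V) : Tournament A where
  rel x y := T.rel x y
  irrefl x := T.irrefl x
  total x y hxy := T.total x y (fun h => hxy (Subtype.ext h))
  asymm x y := T.asymm x y

/-- `T − x`: the subtournament induced on `V ∖ {x}`. -/
def erase (T : Tournament V) (x : V) : Tournament {y : V // y ≠ x} :=
  T.restrict {y | y ≠ x}

/-- `S` embeds into `T`: `S` is isomorphic to the subtournament of `T` induced on
some subset of the vertices of `T`. -/
def Embeds (S : Tournament V) (T : Tournament W) : Prop :=
  ∃ f : V → W, Function.Injective f ∧ ∀ x y, S.rel x y ↔ T.rel (f x) (f y)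

/-- Isomorphism of tournaments. -/
def Iso (S : Tournament V) (T : Tournament W) : Prop :=
  ∃ e : V ≃ W, ∀ x y, S.rel x y ↔ T.rel (e x) (e y)

/-- The dual tournament, obtained by reversing all arcs. -/
def dual (T : Tournament V) : Tournament V where
  rel x y := T.rel y x
  irrefl x := T.irrefl x
  total x y hxy := (T.total x y hxy).symm
  asymm x y h := T.asymm y x h

/-- `X` is an interval of `T`. -/
def IsInterval (T : Tournament V) (X : Set V) : Prop :=
  ∀ y ∉ X, (∀ x ∈ X, T.rel x y) ∨ (∀ x ∈ X, T.rel y x)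

/-- A tournament is indecomposable when all its intervals are trivial. -/
def Indecomposable (T : Tournament V) : Prop :=
  ∀ X : Set V, T.IsInterval X → X = ∅ ∨ X = Set.univ ∨ ∃ x, X = {x}

end Tournament

/-- The transitive tournament `n̲` on `{0, …, n−1}`, with arcs `(i,j)` for `i < j`. -/
def linear (n : ℕ) : Tournament (Fin n) where
  rel x y := x < y
  irrefl x := lt_irrefl x
  total _ _ h := h.lt_or_gt
  asymm _ _ h := lt_asymm h

/-- `2ℕ_{<k} = {0, 2, …, 2(k−1)}` as a subset of `Fin N`. -/
def evensLT {N : ℕ} (k : ℕ) : Set (Fin N) := {i | (i : ℕ) % 2 = 0 ∧ (i : ℕ) < 2 * k}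

/-- `2ℕ_{<k}+1 = {1, 3, …, 2k−1}` as a subset of `Fin N`. -/
def oddsLT {N : ℕ} (k : ℕ) : Set (Fin N) := {i | (i : ℕ) % 2 = 1 ∧ (i : ℕ) < 2 * k}

/-- The Boolean dimension of a (loopless, undirected) graph `G`: the least `m` such
that `G` can be represented by the non-orthogonality relation on `(𝔽₂)^m` with the
ordinary scalar product. -/
noncomputable def booleanDim {V : Type*} (G : SimpleGraph V) : ℕ :=
  sInf {m | ∃ f : V → (Fin m → ZMod 2), ∀ x y : V, x ≠ y →
    (G.Adj x y ↔ ∑ i, f x i * f y i = 1)}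

/-- The Boolean sum `T +̇ T'` of two tournaments on the same vertex set: the graph
whose edges are the pairs of distinct vertices on which the two arcs have opposite
orientations. -/
def boolSum {V : Type*} (T T' : Tournament V) : SimpleGraph V where
  Adj x y := x ≠ y ∧ ¬ (T.rel x y ↔ T'.rel x y)
  symm := ⟨by
    rintro x y ⟨hxy, h⟩
    refine ⟨hxy.symm, ?_⟩
    have h1 : T.rel y x ↔ ¬ T.rel x y :=
      ⟨fun hr => T.asymm y x hr, fun hn => (T.total x y hxy).resolve_left hn⟩
    have h2 : T'.rel y x ↔ ¬ T'.rel x y :=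
      ⟨fun hr => T'.asymm y x hr, fun hn => (T'.total x y hxy).resolve_left hn⟩
    tauto⟩
  loopless := ⟨fun x => by simp⟩

open scoped Classical

/-- Parity (in `ZMod 2`) of the number of sets in `Xs` containing both `x` and `y`. -/
noncomputable def gsum {V : Type*} (x y : V) (Xs : List (Set V)) : ZMod 2 :=
  (Xs.map (fun X => if x ∈ X ∧ y ∈ X then (1 : ZMod 2) else 0)).sum

lemma zmod2_cases (a : ZMod 2) : a = 0 ∨ a = 1 := by revert a; decide

lemma gsum_cons {V : Type*} (x y : V) (X : Set V) (Xs : List (Set V)) :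
    gsum x y (X :: Xs) = (if x ∈ X ∧ y ∈ X then (1 : ZMod 2) else 0) + gsum x y Xs := by
  simp [gsum]

lemma invSeq_rel_iff {V : Type*} (T : Tournament V) (Xs : List (Set V)) {x y : V}
    (hxy : x ≠ y) :
    (T.invSeq Xs).rel x y ↔
      (gsum x y Xs = 0 ∧ T.rel x y) ∨ (gsum x y Xs = 1 ∧ T.rel y x) := by
  induction Xs generalizing T with
  | nil =>
    have h0 : gsum x y ([] : List (Set V)) = 0 := by simp [gsum]
    rw [h0]
    have h01 : (0 : ZMod 2) ≠ 1 := by decide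
    simp only [Tournament.invSeq, List.foldl_nil]
    tauto
  | cons X Xs ih =>
    rw [show T.invSeq (X :: Xs) = (T.inv X).invSeq Xs from rfl, ih, gsum_cons]
    have e11 : (1 : ZMod 2) + 1 = 0 := by decide
    have e10 : (1 : ZMod 2) + 0 = 1 := by decide
    have h01 : (0 : ZMod 2) ≠ 1 := by decide
    have h10 : (1 : ZMod 2) ≠ 0 := by decide
    by_cases hb : x ∈ X ∧ y ∈ X
    · have e1 : (T.inv X).rel x y ↔ T.rel y x := by
        simp only [Tournament.inv]; tauto
      have e2 : (T.inv X).rel y x ↔ T.rel x y := by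
        simp only [Tournament.inv]; tauto
      rw [if_pos hb, e1, e2]
      rcases zmod2_cases (gsum x y Xs) with hg | hg <;> rw [hg]
      · rw [e10]; tauto
      · rw [e11]; tauto
    · have e1 : (T.inv X).rel x y ↔ T.rel x y := by
        simp only [Tournament.inv]; tauto
      have e2 : (T.inv X).rel y x ↔ T.rel y x := by
        simp only [Tournament.inv]; tauto
      rw [if_neg hb, e1, e2, zero_add]

/-- the graphic distance between two tournaments `T, T'` on the same
finite vertex set — the least `m` such that `T' = Inv(T, (X_i)_{i<m})` — equals the
Boolean dimension of the Boolean sum `T +̇ T'`. -/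
theorem dist_eq_booleanDim_boolSum {V : Type*} [Fintype V] (T T' : Tournament V) :
    sInf {m | ∃ Xs : List (Set V), Xs.length = m ∧
        ∀ x y, (T.invSeq Xs).rel x y ↔ T'.rel x y} =
      booleanDim (boolSum T T') := by
  classical
  have h01 : (0 : ZMod 2) ≠ 1 := by decide
  unfold booleanDim
  congr 1
  ext m
  simp only [Set.mem_setOf_eq]
  constructor
  · rintro ⟨Xs, rfl, hXs⟩
    refine ⟨fun x i => if x ∈ Xs.get i then 1 else 0, fun x y hxy => ?_⟩
    have hg : ∑ i, (if x ∈ Xs.get i then (1 : ZMod 2) else 0) *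
        (if y ∈ Xs.get i then (1 : ZMod 2) else 0) = gsum x y Xs := by
      have : ∀ i : Fin Xs.length,
          (if x ∈ Xs.get i then (1 : ZMod 2) else 0) *
            (if y ∈ Xs.get i then (1 : ZMod 2) else 0) =
          (if x ∈ Xs.get i ∧ y ∈ Xs.get i then (1 : ZMod 2) else 0) := by
        intro i; split_ifs <;> simp_all
      rw [Finset.sum_congr rfl (fun i _ => this i)]
      unfold gsum
      conv_rhs => rw [← List.ofFn_get Xs]
      rw [List.map_ofFn, List.sum_ofFn]
      rfl
    rw [hg]
    have hT' := (hXs x y).symm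
    rw [invSeq_rel_iff T Xs hxy] at hT'
    have hyx : T.rel y x ↔ ¬ T.rel x y :=
      ⟨fun hr => T.asymm y x hr, fun hn => (T.total x y hxy).resolve_left hn⟩
    constructor
    · rintro ⟨-, hne⟩
      rcases zmod2_cases (gsum x y Xs) with hg0 | hg1
      · exfalso; rw [hg0] at hT'; tauto
      · exact hg1
    · intro hg1
      rw [hg1] at hT'
      refine ⟨hxy, ?_⟩
      have : gsum x y Xs = 1 := hg1
      tauto
  · rintro ⟨f, hf⟩
    refine ⟨List.ofFn (fun i => {x | f x i = 1}), List.length_ofFn, fun x y => ?_⟩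
    by_cases hxy : x = y
    · subst hxy
      exact iff_of_false ((T.invSeq _).irrefl x) (T'.irrefl x)
    · set Xs : List (Set V) := List.ofFn (fun i => {x | f x i = 1}) with hXsdef
      have hg : gsum x y Xs = ∑ i, f x i * f y i := by
        unfold gsum
        rw [hXsdef, List.map_ofFn, List.sum_ofFn]
        refine Finset.sum_congr rfl (fun i _ => ?_)
        rcases zmod2_cases (f x i) with h1 | h1 <;>
          rcases zmod2_cases (f y i) with h2 | h2 <;>
          simp [Function.comp, h1, h2, Set.mem_setOf_eq]
      have hadj := hf x y hxy
      simp only [boolSum, ne_eq] at hadj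
      rw [invSeq_rel_iff T Xs hxy, hg]
      have hyx : T.rel y x ↔ ¬ T.rel x y :=
        ⟨fun hr => T.asymm y x hr, fun hn => (T.total x y hxy).resolve_left hn⟩
      rcases zmod2_cases (∑ i, f x i * f y i) with hs | hs <;> rw [hs] at hadj ⊢
      · have hiff : T.rel x y ↔ T'.rel x y := by tauto
        have h10 : (1 : ZMod 2) ≠ 0 := by decide
        tauto
      · have hne : ¬ (T.rel x y ↔ T'.rel x y) := by tauto
        have h10 : (1 : ZMod 2) ≠ 0 := by decide
        tauto
end

section
/- For every tournament T on a finite vertex set V, the inversion index i(T) equals the minimum, over all acyclic tournaments T' on V, of the least m such that T' = Inv(T, (X_i)_{i<m}) for some sequence (X_i)_{i<m} of subsets of V; equivalently, i(T) is the minimum over acyclic T' on V of the Boolean dimension of the Boolean sum T +̇ T'. -/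
namespace Tournament
variable {V : Type*}
-- auxiliary lemmas
lemma aux_iff_trans {A B C : Prop} (h1 : ¬(A ↔ B)) (h2 : ¬(B ↔ C)) : A ↔ C := by tauto

lemma aux_ite_mul (p q : Prop) [Decidable p] [Decidable q] [Decidable (p ∧ q)] :
    (if p then (1 : ZMod 2) else 0) * (if q then 1 else 0) = if p ∧ q then 1 else 0 := by
  by_cases hp : p <;> by_cases hq : q <;> simp [hp, hq]

lemma aux_ite_eq_mul {p q : Prop} {inst : Decidable (p ∧ q)} (a b : ZMod 2)
    (hp : p ↔ a = 1) (hq : q ↔ b = 1) :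
    (@ite (ZMod 2) (p ∧ q) inst 1 0) = a * b := by
  have hz : ∀ c : ZMod 2, c = 0 ∨ c = 1 := by decide
  by_cases h : p ∧ q
  · rw [if_pos h, hp.mp h.1, hq.mp h.2]; simp
  · rw [if_neg h]
    rcases hz a with ha | ha <;> rcases hz b with hb | hb <;> rw [ha, hb]
    · simp
    · simp
    · simp
    · exact absurd ⟨hp.mpr ha, hq.mpr hb⟩ h
private lemma aux_not_iff {P Q : Prop} (h : ¬(P ↔ Q)) : Q ↔ ¬P := by tauto
private lemma aux_not_iff_not {P Q : Prop} (h : ¬(P ↔ Q)) : ¬(¬P ↔ ¬Q) := by tauto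

lemma invSeq_cons (T : Tournament V) (X : Set V) (Xs : List (Set V)) :
    T.invSeq (X :: Xs) = (T.inv X).invSeq Xs := rfl

lemma rev_iff (T : Tournament V) {x y : V} (h : x ≠ y) : T.rel y x ↔ ¬ T.rel x y :=
  ⟨fun hr => T.asymm y x hr, fun hn => (T.total x y h).resolve_left hn⟩

lemma inv_rel_iff (T : Tournament V) (X : Set V) {x y : V} (h : x ≠ y) :
    ((T.inv X).rel x y ↔ T.rel x y) ↔ ¬(x ∈ X ∧ y ∈ X) := by
  have hrev := T.rev_iff h
  have hdef : (T.inv X).rel x y ↔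
      (x ∈ X ∧ y ∈ X ∧ T.rel y x) ∨ ((x ∉ X ∨ y ∉ X) ∧ T.rel x y) := Iff.rfl
  by_cases hb : x ∈ X ∧ y ∈ X <;> tauto

open Classical in
lemma invSeq_rel_iff (T : Tournament V) (Xs : List (Set V)) {x y : V} (h : x ≠ y) :
    (((T.invSeq Xs).rel x y ↔ T.rel x y) ↔
      (Xs.map (fun X => if x ∈ X ∧ y ∈ X then (1 : ZMod 2) else 0)).sum = 0) := by
  induction Xs generalizing T with
  | nil => simp [invSeq]
  | cons X Xs ih =>
    rw [invSeq_cons]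
    have h1 := ih (T.inv X)
    have h2 := T.inv_rel_iff X h
    have hz : ∀ a : ZMod 2, a = 0 ∨ a = 1 := by decide
    simp only [List.map_cons, List.sum_cons]
    by_cases hb : x ∈ X ∧ y ∈ X
    · rw [if_pos hb]
      have hBC : ¬((T.inv X).rel x y ↔ T.rel x y) := by rw [h2]; tauto
      rcases hz ((Xs.map (fun X => if x ∈ X ∧ y ∈ X then (1 : ZMod 2) else 0)).sum) with hs | hs <;>
        rw [hs] at h1 ⊢
      · refine iff_of_false (fun hAC => ?_) (by decide)
        exact hBC ((h1.mpr rfl).symm.trans hAC)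
      · refine iff_of_true ?_ (by decide)
        have hAB : ¬(((T.inv X).invSeq Xs).rel x y ↔ (T.inv X).rel x y) :=
          fun hh => absurd (h1.mp hh) (by decide)
        tauto
    · rw [if_neg hb, zero_add, ← h1]
      have hBC : (T.inv X).rel x y ↔ T.rel x y := h2.mpr hb
      tauto

noncomputable def linOf (V : Type*) [Fintype V] : Tournament V where
  rel x y := Fintype.equivFin V x < Fintype.equivFin V y
  irrefl x := lt_irrefl _
  total x y h := Ne.lt_or_gt (fun hc => h ((Fintype.equivFin V).injective hc))
  asymm x y h := lt_asymm h

lemma linOf_acyclic (V : Type*) [Fintype V] : (linOf V).IsAcyclic :=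
  fun _ _ _ h1 h2 => lt_trans h1 h2

lemma exists_reach [Fintype V] (T T' : Tournament V) :
    ∃ Xs : List (Set V), ∀ x y, (T.invSeq Xs).rel x y ↔ T'.rel x y := by
  classical
  suffices H : ∀ n (T : Tournament V),
      (Finset.univ.filter (fun p : V × V => ¬(T.rel p.1 p.2 ↔ T'.rel p.1 p.2))).card = n →
      ∃ Xs : List (Set V), ∀ x y, (T.invSeq Xs).rel x y ↔ T'.rel x y from H _ T rfl
  intro n
  induction n using Nat.strong_induction_on with
  | _ n ih =>
    intro T hT
    set D := Finset.univ.filter (fun p : V × V => ¬(T.rel p.1 p.2 ↔ T'.rel p.1 p.2)) with hD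
    by_cases hemp : D = ∅
    · refine ⟨[], fun x y => ?_⟩
      have hx : (x, y) ∉ D := by rw [hemp]; exact Finset.notMem_empty _
      simp only [hD, Finset.mem_filter, Finset.mem_univ, true_and] at hx
      exact not_not.mp hx
    · obtain ⟨⟨x, y⟩, hmem⟩ := Finset.nonempty_of_ne_empty hemp
      have hxy' : ¬(T.rel x y ↔ T'.rel x y) := by
        have := hmem
        simp only [hD, Finset.mem_filter, Finset.mem_univ, true_and] at this
        exact this
      have hxy : x ≠ y := by
        rintro rfl
        exact hxy' ⟨fun hr => absurd hr (T.irrefl x), fun hr => absurd hr (T'.irrefl x)⟩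
      set T1 := T.inv {x, y} with hT1
      have key : ∀ a b : V, T1.rel a b ↔
          ((a = x ∨ a = y) ∧ (b = x ∨ b = y) ∧ T.rel b a) ∨
          ((¬(a = x ∨ a = y) ∨ ¬(b = x ∨ b = y)) ∧ T.rel a b) := by
        intro a b
        have h0 : T1.rel a b ↔ (a ∈ ({x, y} : Set V) ∧ b ∈ ({x, y} : Set V) ∧ T.rel b a) ∨
            ((a ∉ ({x, y} : Set V) ∨ b ∉ ({x, y} : Set V)) ∧ T.rel a b) := Iff.rfl
        simpa only [Set.mem_insert_iff, Set.mem_singleton_iff] using h0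
      have key1 : T1.rel x y ↔ T.rel y x := by
        rw [key]; tauto
      have key2 : T1.rel y x ↔ T.rel x y := by
        rw [key]; tauto
      have keyo : ∀ a b : V, ¬((a = x ∨ a = y) ∧ (b = x ∨ b = y)) →
          (T1.rel a b ↔ T.rel a b) := by
        intro a b hc; rw [key]; tauto
      have hsub : (Finset.univ.filter
          (fun p : V × V => ¬(T1.rel p.1 p.2 ↔ T'.rel p.1 p.2))) ⊆ D.erase (x, y) := by
        rintro ⟨a, b⟩ hab
        simp only [Finset.mem_filter, Finset.mem_univ, true_and] at hab
        have hab' : a ≠ b := by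
          rintro rfl
          exact hab ⟨fun hr => absurd hr (T1.irrefl a), fun hr => absurd hr (T'.irrefl a)⟩
        rw [Finset.mem_erase]
        simp only [hD, Finset.mem_filter, Finset.mem_univ, true_and, Prod.mk.injEq, not_and]
        by_cases hc : (a = x ∨ a = y) ∧ (b = x ∨ b = y)
        · obtain ⟨hax | hay, hbx | hby⟩ := hc
          · exact absurd (hax.trans hbx.symm) hab'
          · exfalso
            have hT'xy : T'.rel x y ↔ ¬ T.rel x y := aux_not_iff hxy'
            have hTyx := T.rev_iff hxy
            exact hab (by rw [hax, hby, key1, hTyx, hT'xy])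
          · refine ⟨fun he => hxy ((congrArg Prod.fst he).symm.trans hay), ?_⟩
            have h1 := T.rev_iff hxy
            have h2 := T'.rev_iff hxy
            rw [hay, hbx, h1, h2]
            exact aux_not_iff_not hxy'
          · exact absurd (hay.trans hby.symm) hab'
        · have heq := keyo a b hc
          rw [heq] at hab
          refine ⟨fun he => hc ⟨Or.inl (congrArg Prod.fst he), Or.inr (congrArg Prod.snd he)⟩, hab⟩
      have hlt : (Finset.univ.filter
          (fun p : V × V => ¬(T1.rel p.1 p.2 ↔ T'.rel p.1 p.2))).card < n := by
        calc _ ≤ (D.erase (x, y)).card := Finset.card_le_card hsub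
        _ < D.card := Finset.card_erase_lt_of_mem hmem
        _ = n := hT
      obtain ⟨Xs, hXs⟩ := ih _ hlt T1 rfl
      exact ⟨({x, y} : Set V) :: Xs, hXs⟩

end Tournament

open Classical in
lemma reach_eq_dim {V : Type*} (T T' : Tournament V) :
    {m | ∃ Xs : List (Set V), Xs.length = m ∧ ∀ x y, (T.invSeq Xs).rel x y ↔ T'.rel x y}
      = {m | ∃ f : V → (Fin m → ZMod 2), ∀ x y : V, x ≠ y →
          ((boolSum T T').Adj x y ↔ ∑ i, f x i * f y i = 1)} := by
  ext m
  simp only [Set.mem_setOf_eq]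
  constructor
  · rintro ⟨Xs, rfl, hrel⟩
    refine ⟨fun x i => if x ∈ Xs.get i then 1 else 0, fun x y hxy => ?_⟩
    have hsum : ∑ i, (if x ∈ Xs.get i then (1:ZMod 2) else 0) * (if y ∈ Xs.get i then 1 else 0)
        = (Xs.map (fun X => if x ∈ X ∧ y ∈ X then (1 : ZMod 2) else 0)).sum := by
      rw [Fin.sum_univ_def]
      conv_rhs => rw [← List.map_get_finRange Xs]
      rw [List.map_map]
      refine congrArg List.sum (List.map_congr_left fun i _ => ?_)
      simp only [Function.comp]
      exact Tournament.aux_ite_mul _ _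
    rw [hsum]
    have h1 := T.invSeq_rel_iff Xs hxy
    have h2 := hrel x y
    have hadj : (boolSum T T').Adj x y ↔ (x ≠ y ∧ ¬(T.rel x y ↔ T'.rel x y)) := Iff.rfl
    rw [hadj]
    have hz : ((Xs.map (fun X => if x ∈ X ∧ y ∈ X then (1 : ZMod 2) else 0)).sum = 0) ↔
        ¬((Xs.map (fun X => if x ∈ X ∧ y ∈ X then (1 : ZMod 2) else 0)).sum = 1) := by
      have : ∀ a : ZMod 2, a = 0 ↔ ¬ a = 1 := by decide
      exact this _
    tauto
  · rintro ⟨f, hf⟩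
    refine ⟨(List.finRange m).map (fun i => {x | f x i = 1}), by simp, fun x y => ?_⟩
    by_cases hxy : x = y
    · subst hxy; exact iff_of_false ((T.invSeq _).irrefl x) (T'.irrefl x)
    · have h1 := T.invSeq_rel_iff ((List.finRange m).map (fun i => {x | f x i = 1})) hxy
      have h2 := hf x y hxy
      have hsum : ((((List.finRange m).map (fun i => {x | f x i = 1})).map
          (fun X => if x ∈ X ∧ y ∈ X then (1 : ZMod 2) else 0)).sum) = ∑ i, f x i * f y i := by
        rw [List.map_map, Fin.sum_univ_def]
        refine congrArg List.sum (List.map_congr_left fun i _ => ?_)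
        simp only [Function.comp]
        exact Tournament.aux_ite_eq_mul (f x i) (f y i) Iff.rfl Iff.rfl
      rw [hsum] at h1
      have hadj : (boolSum T T').Adj x y ↔ (x ≠ y ∧ ¬(T.rel x y ↔ T'.rel x y)) := Iff.rfl
      rw [hadj] at h2
      have hz : ((∑ i, f x i * f y i) = 0) ↔ ¬((∑ i, f x i * f y i) = 1) := by
        have : ∀ a : ZMod 2, a = 0 ↔ ¬ a = 1 := by decide
        exact this _
      by_cases hQ : (∑ i, f x i * f y i) = 1
      · have hBC : ¬(T.rel x y ↔ T'.rel x y) := (h2.mpr hQ).2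
        have hAB : ¬((T.invSeq ((List.finRange m).map (fun i => {x | f x i = 1}))).rel x y
            ↔ T.rel x y) := fun hh => (hz.mp (h1.mp hh)) hQ
        exact Tournament.aux_iff_trans hAB hBC
      · have hAB := h1.mpr (hz.mpr hQ)
        have hBC : T.rel x y ↔ T'.rel x y := not_not.mp (fun hn => hQ (h2.mp ⟨hxy, hn⟩))
        exact hAB.trans hBC

/-- the inversion index of a tournament on a finite vertex set `V` is
the minimum, over acyclic tournaments `T'` on `V`, of the least `m` such that
`T' = Inv(T, (X_i)_{i<m})`; equivalently, the minimum over acyclic `T'` of the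
Boolean dimension of `T +̇ T'`. -/
theorem index_eq_min_dist_to_acyclic {V : Type*} [Fintype V] (T : Tournament V) :
    T.index =
      sInf {k | ∃ T' : Tournament V, T'.IsAcyclic ∧
        k = sInf {m | ∃ Xs : List (Set V), Xs.length = m ∧
              ∀ x y, (T.invSeq Xs).rel x y ↔ T'.rel x y}} ∧
    T.index =
      sInf {k | ∃ T' : Tournament V, T'.IsAcyclic ∧ k = booleanDim (boolSum T T')} := by
  classical
  set S := fun T' : Tournament V => {m | ∃ Xs : List (Set V), Xs.length = m ∧
      ∀ x y, (T.invSeq Xs).rel x y ↔ T'.rel x y} with hS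
  have hSne : ∀ T' : Tournament V, (S T').Nonempty := by
    intro T'
    obtain ⟨Xs, h⟩ := T.exists_reach T'
    exact ⟨Xs.length, Xs, rfl, h⟩
  have hSmem : ∀ T' : Tournament V, sInf (S T') ∈ S T' := fun T' => Nat.sInf_mem (hSne T')
  have hlin := Tournament.linOf_acyclic V
  have main1 : T.index = sInf {k | ∃ T' : Tournament V, T'.IsAcyclic ∧ k = sInf (S T')} := by
    apply le_antisymm
    · refine le_csInf ⟨sInf (S (Tournament.linOf V)), ⟨Tournament.linOf V, hlin, rfl⟩⟩ ?_
      rintro k ⟨T', hT'a, rfl⟩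
      obtain ⟨Xs, hlen, hrel⟩ := hSmem T'
      apply Nat.sInf_le
      refine ⟨Xs, hlen, fun x y z hxy hyz => ?_⟩
      exact (hrel x z).mpr (hT'a x y z ((hrel x y).mp hxy) ((hrel y z).mp hyz))
    · have hAne : {m | ∃ Xs : List (Set V), Xs.length = m ∧ (T.invSeq Xs).IsAcyclic}.Nonempty := by
        obtain ⟨Xs, hlen, hrel⟩ := hSmem (Tournament.linOf V)
        refine ⟨Xs.length, Xs, rfl, fun x y z hxy hyz => ?_⟩
        exact (hrel x z).mpr (hlin x y z ((hrel x y).mp hxy) ((hrel y z).mp hyz))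
      have hidx : T.index ∈ {m | ∃ Xs : List (Set V), Xs.length = m ∧ (T.invSeq Xs).IsAcyclic} :=
        Nat.sInf_mem hAne
      obtain ⟨Xs, hlen, hacy⟩ := hidx
      calc sInf {k | ∃ T' : Tournament V, T'.IsAcyclic ∧ k = sInf (S T')}
          ≤ sInf (S (T.invSeq Xs)) := Nat.sInf_le ⟨T.invSeq Xs, hacy, rfl⟩
        _ ≤ T.index := Nat.sInf_le ⟨Xs, hlen, fun x y => Iff.rfl⟩
  have hdim : ∀ T' : Tournament V, sInf (S T') = booleanDim (boolSum T T') := by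
    intro T'
    have : booleanDim (boolSum T T') = sInf {m | ∃ f : V → (Fin m → ZMod 2), ∀ x y : V, x ≠ y →
        ((boolSum T T').Adj x y ↔ ∑ i, f x i * f y i = 1)} := rfl
    rw [this, hS]
    exact congrArg sInf (reach_eq_dim T T')
  constructor
  · exact main1
  · rw [main1]
    congr 1
    ext k
    simp only [Set.mem_setOf_eq]
    constructor
    · rintro ⟨T', h1, rfl⟩; exact ⟨T', h1, (hdim T')⟩
    · rintro ⟨T', h1, rfl⟩; exact ⟨T', h1, (hdim T').symm⟩
end

section
/- Every tournament T on n vertices, with n ≥ 4, has inversion index i(T) ≤ n − 3. -/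
namespace InvAux

open Tournament

def brel (b01 b02 b03 b12 b13 b23 : Bool) (i j : Fin 4) : Bool :=
  match i.val, j.val with
  | 0,1 => b01 | 0,2 => b02 | 0,3 => b03 | 1,2 => b12 | 1,3 => b13 | 2,3 => b23
  | 1,0 => !b01 | 2,0 => !b02 | 3,0 => !b03 | 2,1 => !b12 | 3,1 => !b13 | 3,2 => !b23
  | _,_ => false

def invb (r : Fin 4 → Fin 4 → Bool) (X : Fin 4 → Bool) (i j : Fin 4) : Bool :=
  if X i && X j then r j i else r i j

theorem four_bool : ∀ b01 b02 b03 b12 b13 b23 : Bool, ∃ X : Fin 4 → Bool,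
    ∀ i j k : Fin 4, invb (brel b01 b02 b03 b12 b13 b23) X i j = true →
      invb (brel b01 b02 b03 b12 b13 b23) X j k = true →
      invb (brel b01 b02 b03 b12 b13 b23) X i k = true := by decide

theorem ext' {V : Type*} {T S : Tournament V} (h : ∀ x y, T.rel x y ↔ S.rel x y) :
    T = S := by
  cases T with | mk r hi ht ha =>
  cases S with | mk r' hi' ht' ha' =>
  have : r = r' := funext fun x => funext fun y => propext (h x y)
  subst this
  rfl

theorem key_abstract (R : Fin 4 → Fin 4 → Prop) (hirr : ∀ i, ¬ R i i)
    (htot : ∀ i j : Fin 4, i ≠ j → R i j ∨ R j i) (hasym : ∀ i j, R i j → ¬ R j i)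
    (d : Fin 4 → Fin 4 → Bool) (hdec : ∀ i j, d i j = true ↔ R i j) :
    ∀ i j, brel (d 0 1) (d 0 2) (d 0 3) (d 1 2) (d 1 3) (d 2 3) i j = true ↔ R i j := by
  have hnd : ∀ i j : Fin 4, i ≠ j → ((!(d j i)) = true ↔ R i j) := by
    intro i j hij
    rw [Bool.not_eq_true']
    constructor
    · intro hb
      refine (htot i j hij).resolve_right fun h => ?_
      rw [(hdec j i).2 h] at hb
      exact absurd hb (by simp)
    · intro h
      by_contra hb
      exact hasym i j h ((hdec j i).1 (eq_true_of_ne_false hb))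
  have hdiag : ∀ i : Fin 4, (false = true ↔ R i i) := by
    intro i
    simp [hirr i]
  have hv : ∀ i : Fin 4, i = 0 ∨ i = 1 ∨ i = 2 ∨ i = 3 := by decide
  intro i j
  rcases hv i with h|h|h|h <;> subst h <;> rcases hv j with h|h|h|h <;> subst h <;>
    first
      | exact hdec _ _
      | exact hnd _ _ (by decide)
      | exact hdiag _

theorem base {V : Type*} [Fintype V] (h4 : Fintype.card V = 4) (T : Tournament V) :
    ∃ X : Set V, (T.inv X).IsAcyclic := by
  classical
  let e : V ≃ Fin 4 := Fintype.equivFinOfCardEq h4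
  let R : Fin 4 → Fin 4 → Prop := fun i j => T.rel (e.symm i) (e.symm j)
  let d : Fin 4 → Fin 4 → Bool := fun i j => decide (R i j)
  have hirr : ∀ i, ¬ R i i := fun i => T.irrefl _
  have htot : ∀ i j : Fin 4, i ≠ j → R i j ∨ R j i := fun i j hij =>
    T.total _ _ (fun h => hij (by simpa using e.symm.injective h))
  have hasym : ∀ i j, R i j → ¬ R j i := fun i j => T.asymm _ _
  have hdec : ∀ i j, d i j = true ↔ R i j := fun i j => decide_eq_true_iff
  have key := key_abstract R hirr htot hasym d hdec
  obtain ⟨X, hX⟩ := four_bool (d 0 1) (d 0 2) (d 0 3) (d 1 2) (d 1 3) (d 2 3)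
  refine ⟨{v | X (e v) = true}, ?_⟩
  have bridge : ∀ a b : V, (T.inv {v | X (e v) = true}).rel a b ↔
      invb (brel (d 0 1) (d 0 2) (d 0 3) (d 1 2) (d 1 3) (d 2 3)) X (e a) (e b) = true := by
    intro a b
    have ka := key (e a) (e b)
    have kb := key (e b) (e a)
    simp only [R, e.symm_apply_apply] at ka kb
    by_cases hA : X (e a) = true <;> by_cases hB : X (e b) = true <;>
      simp [Tournament.inv, invb, hA, hB, ka, kb, Set.mem_setOf_eq]
  intro x y z hxy hyz
  exact (bridge x z).2 (hX (e x) (e y) (e z) ((bridge x y).1 hxy) ((bridge y z).1 hyz))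

variable {V : Type*}

def liftSet (x : V) (S : Set {y : V // y ≠ x}) : Set V := Subtype.val '' S

theorem mem_liftSet {x : V} (S : Set {y : V // y ≠ x}) (a : {y : V // y ≠ x}) :
    (↑a ∈ liftSet x S) ↔ a ∈ S :=
  ⟨fun ⟨c, hc, hcv⟩ => (Subtype.ext hcv : c = a) ▸ hc, fun h => ⟨a, h, rfl⟩⟩

theorem not_mem_liftSet {x : V} (S : Set {y : V // y ≠ x}) : x ∉ liftSet x S := by
  rintro ⟨c, _, hcv⟩
  exact c.2 hcv

theorem erase_inv (x : V) (U : Tournament V) (S : Set {y : V // y ≠ x}) :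
    (U.inv (liftSet x S)).erase x = (U.erase x).inv S := by
  apply ext'
  intro a b
  show ((↑a ∈ liftSet x S ∧ ↑b ∈ liftSet x S ∧ U.rel ↑b ↑a) ∨
      ((↑a ∉ liftSet x S ∨ ↑b ∉ liftSet x S) ∧ U.rel ↑a ↑b)) ↔
    ((a ∈ S ∧ b ∈ S ∧ U.rel ↑b ↑a) ∨ ((a ∉ S ∨ b ∉ S) ∧ U.rel ↑a ↑b))
  rw [mem_liftSet, mem_liftSet]

theorem erase_invSeq (x : V) (Xs : List (Set {y : V // y ≠ x})) :
    ∀ U : Tournament V,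
      (U.invSeq (Xs.map (liftSet x))).erase x = (U.erase x).invSeq Xs := by
  induction Xs with
  | nil => intro U; rfl
  | cons S rest ih =>
    intro U
    show ((U.inv (liftSet x S)).invSeq (rest.map (liftSet x))).erase x
      = ((U.erase x).inv S).invSeq rest
    rw [ih, erase_inv]

theorem dom_inv (x : V) (U : Tournament V) (S : Set {y : V // y ≠ x})
    (hdom : ∀ v, v ≠ x → U.rel x v) : ∀ v, v ≠ x → (U.inv (liftSet x S)).rel x v := by
  intro v hv
  exact Or.inr ⟨Or.inl (not_mem_liftSet S), hdom v hv⟩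

theorem dom_invSeq (x : V) (Xs : List (Set {y : V // y ≠ x})) :
    ∀ U : Tournament V, (∀ v, v ≠ x → U.rel x v) →
      ∀ v, v ≠ x → (U.invSeq (Xs.map (liftSet x))).rel x v := by
  induction Xs with
  | nil => intro U h; exact h
  | cons S rest ih =>
    intro U h
    exact ih (U.inv (liftSet x S)) (dom_inv x U S h)

theorem acyclic_of_dom (x : V) (U : Tournament V) (hdom : ∀ v, v ≠ x → U.rel x v)
    (h : (U.erase x).IsAcyclic) : U.IsAcyclic := by
  intro a b c hab hbc
  by_cases hbx : b = x
  · subst hbx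
    have hax : a ≠ b := fun h' => U.irrefl b (h' ▸ hab)
    exact absurd (hdom a hax) (U.asymm a b hab)
  by_cases hcx : c = x
  · subst hcx
    exact absurd (hdom b hbx) (U.asymm b c hbc)
  by_cases hax : a = x
  · subst hax
    exact hdom c hcx
  · exact h ⟨a, hax⟩ ⟨b, hbx⟩ ⟨c, hcx⟩ hab hbc

theorem main : ∀ (n : ℕ), 4 ≤ n → ∀ {V : Type*} [Fintype V], Fintype.card V = n →
    ∀ T : Tournament V, ∃ Xs : List (Set V), Xs.length ≤ n - 3 ∧
      (T.invSeq Xs).IsAcyclic := by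
  intro n hn
  induction n, hn using Nat.le_induction with
  | base =>
    intro V _ hcard T
    obtain ⟨X, hX⟩ := base hcard T
    exact ⟨[X], by simp, hX⟩
  | succ n hn ih =>
    intro V _ hcard T
    classical
    have hpos : 0 < Fintype.card V := by omega
    obtain ⟨x⟩ : Nonempty V := Fintype.card_pos_iff.mp hpos
    set X0 : Set V := {x} ∪ {v | T.rel v x} with hX0
    have hdom : ∀ v, v ≠ x → (T.inv X0).rel x v := by
      intro v hv
      by_cases h : T.rel v x
      · exact Or.inl ⟨Or.inl rfl, Or.inr h, h⟩
      · refine Or.inr ⟨Or.inr ?_, (T.total x v (fun h' => hv h'.symm)).resolve_right h⟩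
        rintro (h1 | h2)
        · exact hv h1
        · exact h h2
    have hcard' : Fintype.card {y : V // y ≠ x} = n := by
      rw [Fintype.card_subtype_compl, Fintype.card_subtype_eq, hcard]
      omega
    obtain ⟨Xs, hlen, hacyc⟩ := ih hcard' ((T.inv X0).erase x)
    refine ⟨X0 :: Xs.map (liftSet x), ?_, ?_⟩
    · simp only [List.length_cons, List.length_map]
      omega
    · show ((T.inv X0).invSeq (Xs.map (liftSet x))).IsAcyclic
      apply acyclic_of_dom x _ (dom_invSeq x Xs (T.inv X0) hdom)
      rw [erase_invSeq]
      exact hacyc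

end InvAux

/-- every tournament on `n ≥ 4` vertices has inversion index at most
`n − 3`. -/
theorem index_le_card_sub_three {V : Type*} [Fintype V] (n : ℕ) (hn : 4 ≤ n)
    (hcard : Fintype.card V = n) (T : Tournament V) :
    T.index ≤ n - 3 := by
  obtain ⟨Xs, hlen, hacyc⟩ := InvAux.main n hn hcard T
  exact le_trans (Nat.sInf_le ⟨Xs, rfl, hacyc⟩) hlen
end
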